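/- For every integer r ≥ 3 and all reals a, b with 0 < a < b ≤ 1 and b − a > r!/r^r, there exists a finite family 𝓕 of r-graphs whose Turán density satisfies a < π(𝓕) < b. (Equivalently, every open interval (a,b) ⊆ (0,1) disjoint from Π_fin^(r) has length at most r!/r^r.) -/

import Mathlib

open Filter Topology

/-- An `r`-graph: a finite vertex set (identified with `Fin n`) together with a set of
edges, each of which is an `r`-element subset of the vertex set. -/
structure RGraph (r : ℕ) where
  n : ℕ
  edges : Finset (Finset (Fin n))
  card_eq : ∀ e ∈ edges, e.card = r

/-- `F` is a subgraph of `G`: there is an injection of the vertices of `F` into the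
vertices of `G` carrying every edge of `F` to an edge of `G`. -/
def RGraph.IsSubgraph {r : ℕ} (F G : RGraph r) : Prop :=
  ∃ f : Fin F.n → Fin G.n, Function.Injective f ∧ ∀ e ∈ F.edges, e.image f ∈ G.edges

/-- `G` is `𝓕`-free: no member of `𝓕` is a subgraph of `G`. -/
def RGraph.Free {r : ℕ} (𝓕 : Set (RGraph r)) (G : RGraph r) : Prop :=
  ∀ F ∈ 𝓕, ¬ F.IsSubgraph G

/-- The Turán function `ex(n, 𝓕)`: the maximum number of edges in an `𝓕`-free
`r`-graph on `n` vertices. -/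
noncomputable def exNum (r : ℕ) (𝓕 : Set (RGraph r)) (n : ℕ) : ℕ :=
  sSup {k : ℕ | ∃ G : RGraph r, G.n = n ∧ RGraph.Free 𝓕 G ∧ G.edges.card = k}

/-- `Π_∞^(r)`: the set of Turán densities `π(𝓕) = lim_{n→∞} ex(n,𝓕)/C(n,r)` over all
(possibly infinite, possibly empty) families `𝓕` of `r`-graphs. -/
def turanDensities (r : ℕ) : Set ℝ :=
  {x : ℝ | ∃ 𝓕 : Set (RGraph r),
    Tendsto (fun n : ℕ => (exNum r 𝓕 n : ℝ) / (n.choose r : ℝ)) atTop (𝓝 x)}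

namespace TuranAux
open Finset
variable {r : ℕ}

def exSet (r : ℕ) (𝓕 : Set (RGraph r)) (n : ℕ) : Set ℕ :=
  {k : ℕ | ∃ G : RGraph r, G.n = n ∧ RGraph.Free 𝓕 G ∧ G.edges.card = k}

lemma edges_card_le (G : RGraph r) : G.edges.card ≤ G.n.choose r := by
  classical
  have h : G.edges ⊆ powersetCard r (univ : Finset (Fin G.n)) := fun e he =>
    mem_powersetCard.2 ⟨subset_univ _, G.card_eq e he⟩
  simpa [card_powersetCard] using card_le_card h

lemma bddAbove_exSet {𝓕 : Set (RGraph r)} {n : ℕ} : BddAbove (exSet r 𝓕 n) := by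
  refine ⟨n.choose r, ?_⟩
  rintro k ⟨G, rfl, -, rfl⟩
  exact edges_card_le G

lemma le_exNum {𝓕 : Set (RGraph r)} {n : ℕ} (G : RGraph r) (hn : G.n = n)
    (hf : G.Free 𝓕) : G.edges.card ≤ exNum r 𝓕 n :=
  le_csSup bddAbove_exSet ⟨G, hn, hf, rfl⟩

def emptyG (r n : ℕ) : RGraph r := ⟨n, ∅, by simp⟩

lemma exNum_spec {𝓕 : Set (RGraph r)} (hfe : ∀ m, RGraph.Free 𝓕 (emptyG r m)) (n : ℕ) :
    ∃ G : RGraph r, G.n = n ∧ G.Free 𝓕 ∧ G.edges.card = exNum r 𝓕 n :=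
  Nat.sSup_mem (s := exSet r 𝓕 n) ⟨0, emptyG r n, rfl, hfe n, rfl⟩ bddAbove_exSet


lemma free_subgraph {𝓕 : Set (RGraph r)} {G H : RGraph r} (hG : G.Free 𝓕)
    (hHG : H.IsSubgraph G) : H.Free 𝓕 := by
  rintro F hF ⟨f, hfi, hfe⟩
  obtain ⟨g, hgi, hge⟩ := hHG
  refine hG F hF ⟨g ∘ f, hgi.comp hfi, fun e he => ?_⟩
  rw [← Finset.image_image]
  exact hge _ (hfe e he)

def delVert {m : ℕ} (G : RGraph r) (h : G.n = m + 1) (v : Fin (m + 1)) : RGraph r where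
  n := m
  edges := (powersetCard r (univ : Finset (Fin m))).filter
      (fun e => e.image (fun x => Fin.cast h.symm (v.succAbove x)) ∈ G.edges)
  card_eq := fun e he => (mem_powersetCard.1 (mem_filter.1 he).1).2

lemma delVert_inj {m : ℕ} (h : m + 1 = m + 1) (v : Fin (m + 1)) :
    Function.Injective (fun x : Fin m => Fin.cast h (v.succAbove x)) := by
  intro x y hxy
  simpa using hxy

lemma delVert_subgraph {m : ℕ} (G : RGraph r) (h : G.n = m + 1) (v : Fin (m + 1)) :
    (delVert G h v).IsSubgraph G := by
  refine ⟨fun x => Fin.cast h.symm (v.succAbove x), ?_, fun e he => by unfold delVert at he; exact (mem_filter.1 he).2⟩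
  intro x y hxy
  exact Fin.succAbove_right_injective (Fin.cast_injective _ hxy)

lemma delVert_card {m : ℕ} (G : RGraph r) (h : G.n = m + 1) (v : Fin (m + 1)) :
    (delVert G h v).edges.card
      = (G.edges.filter (fun S => Fin.cast h.symm v ∉ S)).card := by
  classical
  set j : Fin m → Fin G.n := fun x => Fin.cast h.symm (v.succAbove x) with hj
  have hjinj : Function.Injective j := by
    intro x y hxy
    exact Fin.succAbove_right_injective (Fin.cast_injective _ hxy)
  have hrange : ∀ x : Fin G.n, x ∈ Set.range j ↔ x ≠ Fin.cast h.symm v := by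
    intro x
    constructor
    · rintro ⟨y, rfl⟩ heq
      exact Fin.succAbove_ne v y (Fin.cast_injective _ heq)
    · intro hx
      have hxv : (Fin.cast h x : Fin (m+1)) ≠ v := by
        intro hc
        exact hx (Fin.ext (by simp [← hc]))
      obtain ⟨z, hz⟩ := Fin.exists_succAbove_eq hxv
      exact ⟨z, by simp only [hj]; exact Fin.ext (by simp [hz])⟩
  refine Finset.card_bij (fun e _ => e.image j) ?_ ?_ ?_
  · intro e he
    rw [mem_filter]
    refine ⟨by unfold delVert at he; exact (mem_filter.1 he).2, ?_⟩
    intro hvmem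
    obtain ⟨x, -, hx⟩ := Finset.mem_image.1 hvmem
    exact ((hrange (j x)).1 ⟨x, rfl⟩) hx
  · intro e₁ h₁ e₂ h₂ heq
    exact (Finset.image_injective hjinj) heq
  · intro S hS
    obtain ⟨hSE, hSv⟩ := mem_filter.1 hS
    have hpre : (S.preimage j (hjinj.injOn)).image j = S := by
      rw [Finset.image_preimage]
      refine Finset.filter_true_of_mem (fun x hx => ?_)
      exact (hrange x).2 (fun hc => hSv (hc ▸ hx))
    refine ⟨S.preimage j hjinj.injOn, ?_, hpre⟩
    unfold delVert; rw [mem_filter]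
    constructor
    · refine mem_powersetCard.2 ⟨subset_univ _, ?_⟩
      have := Finset.card_image_of_injective (S.preimage j hjinj.injOn) hjinj
      rw [hpre] at this
      rw [← this]
      exact G.card_eq S hSE
    · rw [hpre]; exact hSE

lemma choose_identity {n : ℕ} (hn : r ≤ n) :
    (n + 1 - r) * ((n + 1).choose r) = (n + 1) * n.choose r := by
  have h1 : (n + 1).descFactorial (r + 1) = (n + 1 - r) * (n + 1).descFactorial r :=
    Nat.descFactorial_succ _ _
  have h2 : (n + 1).descFactorial (r + 1) = (n + 1) * n.descFactorial r :=
    Nat.succ_descFactorial_succ _ _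
  have h3 : (n + 1).descFactorial r = r.factorial * (n + 1).choose r :=
    Nat.descFactorial_eq_factorial_mul_choose _ _
  have h4 : n.descFactorial r = r.factorial * n.choose r :=
    Nat.descFactorial_eq_factorial_mul_choose _ _
  have key : r.factorial * ((n + 1 - r) * ((n + 1).choose r))
      = r.factorial * ((n + 1) * n.choose r) := by
    rw [mul_left_comm, ← h3, ← h1, h2, h4, mul_left_comm]
  exact Nat.eq_of_mul_eq_mul_left r.factorial_pos key

lemma exNum_mul_le {𝓕 : Set (RGraph r)} (hfe : ∀ m, RGraph.Free 𝓕 (emptyG r m))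
    {n : ℕ} (hn : r ≤ n) :
    exNum r 𝓕 (n + 1) * (n + 1 - r) ≤ (n + 1) * exNum r 𝓕 n := by
  classical
  obtain ⟨G, hGn, hGf, hGc⟩ := exNum_spec hfe (n + 1)
  have key : ∀ v : Fin G.n, (G.edges.filter (fun S => v ∉ S)).card ≤ exNum r 𝓕 n := by
    intro v
    have hv : Fin.cast hGn.symm (Fin.cast hGn v) = v := rfl
    have hc := delVert_card G hGn (Fin.cast hGn v)
    rw [hv] at hc
    rw [← hc]
    refine le_exNum _ rfl (free_subgraph hGf (delVert_subgraph G hGn (Fin.cast hGn v)))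
  have hsum : ∑ v : Fin G.n, (G.edges.filter (fun S => v ∉ S)).card
      = G.edges.card * (G.n - r) := by
    simp only [Finset.card_filter]
    rw [Finset.sum_comm]
    rw [Finset.sum_congr rfl (fun S hS => ?_), Finset.sum_const, smul_eq_mul]
    have h1 : (∑ v : Fin G.n, if v ∉ S then 1 else 0)
        = (univ.filter (fun v : Fin G.n => v ∉ S)).card := (Finset.card_filter _ _).symm
    rw [h1, Finset.filter_not, Finset.filter_mem_eq_inter, Finset.univ_inter,
      Finset.card_sdiff_of_subset (subset_univ _), card_univ, Fintype.card_fin, G.card_eq S hS]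
  have hle : G.edges.card * (G.n - r) ≤ G.n * exNum r 𝓕 n := by
    rw [← hsum]
    calc ∑ v : Fin G.n, (G.edges.filter (fun S => v ∉ S)).card
        ≤ ∑ _v : Fin G.n, exNum r 𝓕 n := Finset.sum_le_sum (fun v _ => key v)
      _ = G.n * exNum r 𝓕 n := by rw [Finset.sum_const, card_univ, Fintype.card_fin, smul_eq_mul]
  have e1 : G.n - r = n + 1 - r := by rw [hGn]
  calc exNum r 𝓕 (n + 1) * (n + 1 - r) = G.edges.card * (G.n - r) := by rw [← hGc, e1]
    _ ≤ G.n * exNum r 𝓕 n := hle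
    _ = (n + 1) * exNum r 𝓕 n := by rw [hGn]

lemma dd_antitone_aux {𝓕 : Set (RGraph r)} (hfe : ∀ m, RGraph.Free 𝓕 (emptyG r m))
    (hr : 0 < r) {n : ℕ} (hn : r ≤ n) :
    (exNum r 𝓕 (n + 1) : ℝ) / ((n + 1).choose r) ≤ (exNum r 𝓕 n : ℝ) / (n.choose r) := by
  have h1 : 0 < (n.choose r : ℝ) := by exact_mod_cast Nat.choose_pos hn
  have h2 : 0 < (((n + 1).choose r : ℕ) : ℝ) := by
    exact_mod_cast Nat.choose_pos (le_trans hn (Nat.le_succ n))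
  rw [div_le_div_iff₀ h2 h1]
  have hkey : exNum r 𝓕 (n + 1) * n.choose r ≤ exNum r 𝓕 n * (n + 1).choose r := by
    have h := exNum_mul_le hfe hn
    have h5 : (n + 1) * (exNum r 𝓕 (n + 1) * n.choose r)
        ≤ (n + 1) * (exNum r 𝓕 n * (n + 1).choose r) := by
      calc (n + 1) * (exNum r 𝓕 (n + 1) * n.choose r)
          = exNum r 𝓕 (n + 1) * ((n + 1) * n.choose r) := by ring
        _ = exNum r 𝓕 (n + 1) * ((n + 1 - r) * ((n + 1).choose r)) := by
            rw [choose_identity hn]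
        _ = (exNum r 𝓕 (n + 1) * (n + 1 - r)) * ((n + 1).choose r) := by ring
        _ ≤ ((n + 1) * exNum r 𝓕 n) * ((n + 1).choose r) :=
            Nat.mul_le_mul_right _ h
        _ = (n + 1) * (exNum r 𝓕 n * (n + 1).choose r) := by ring
    exact Nat.le_of_mul_le_mul_left h5 (Nat.succ_pos n)
  exact_mod_cast hkey

noncomputable def dd (𝓕 : Set (RGraph r)) (n : ℕ) : ℝ := (exNum r 𝓕 n : ℝ) / (n.choose r)

lemma dd_nonneg {𝓕 : Set (RGraph r)} (n : ℕ) : 0 ≤ dd 𝓕 n := by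
  unfold dd; positivity

lemma dd_tendsto {𝓕 : Set (RGraph r)} (hfe : ∀ m, RGraph.Free 𝓕 (emptyG r m)) (hr : 0 < r) :
    Tendsto (dd 𝓕) atTop (𝓝 (⨅ n, dd 𝓕 (n + r))) := by
  have hanti : Antitone (fun n => dd 𝓕 (n + r)) := by
    refine antitone_nat_of_succ_le (fun n => ?_)
    have : n + 1 + r = (n + r) + 1 := by ring
    rw [this]
    exact dd_antitone_aux hfe hr (Nat.le_add_left r n)
  have hbdd : BddBelow (Set.range (fun n => dd 𝓕 (n + r))) := by
    refine ⟨0, ?_⟩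
    rintro x ⟨n, rfl⟩
    exact dd_nonneg _
  exact (tendsto_add_atTop_iff_nat r).1 (tendsto_atTop_ciInf hanti hbdd)

/-! ### Patterns, homomorphisms, blow-ups -/

variable {T : ℕ}

def Good (E : Finset (Finset (Fin T))) (G : RGraph r) : Prop :=
  ∃ c : Fin G.n → Fin T, ∀ e ∈ G.edges, e.image c ∈ E

def Fam (E : Finset (Finset (Fin T))) (M : ℕ) : Set (RGraph r) :=
  {F : RGraph r | F.n ≤ M ∧ ¬ Good E F}

lemma free_of_good {E : Finset (Finset (Fin T))} {M : ℕ} {G : RGraph r}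
    (h : Good E G) : G.Free (Fam E M) := by
  classical
  rintro F ⟨-, hF⟩ ⟨f, hfi, hfe⟩
  obtain ⟨c, hc⟩ := h
  refine hF ⟨c ∘ f, fun e he => ?_⟩
  rw [← Finset.image_image]
  exact hc _ (hfe e he)

lemma good_of_free (hT : 0 < T) {E : Finset (Finset (Fin T))} {M : ℕ} {G : RGraph r}
    (hn : G.n ≤ M) (h : G.Free (Fam E M)) : Good E G := by
  by_contra hg
  exact h G ⟨hn, hg⟩ ⟨id, Function.injective_id, by simp⟩

lemma emptyG_free (hT : 0 < T) (E : Finset (Finset (Fin T))) (M m : ℕ) :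
    RGraph.Free (r := r) (Fam E M) (emptyG r m) := by
  apply free_of_good
  exact ⟨fun _ => ⟨0, hT⟩, by intro e he; unfold emptyG at he; exact (Finset.notMem_empty e he).elim⟩

/-- Exact count of `r`-subsets with a prescribed rainbow image. -/
lemma count_image_eq {n : ℕ} (c : Fin n → Fin T) {e : Finset (Fin T)} (he : e.card = r) :
    ((powersetCard r (univ : Finset (Fin n))).filter (fun S => S.image c = e)).card
      = ∏ i ∈ e, (univ.filter (fun v => c v = i)).card := by
  classical
  rw [← Finset.card_pi]
  have hsing : ∀ S : Finset (Fin n), S ∈ (powersetCard r (univ : Finset (Fin n))).filter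
      (fun S => S.image c = e) → ∀ v ∈ S, S.filter (fun x => c x = c v) = {v} := by
    intro S hS v hv
    obtain ⟨hS1, hS2⟩ := Finset.mem_filter.1 hS
    have hScard : S.card = r := (mem_powersetCard.1 hS1).2
    have hinj : Set.InjOn c S := Finset.injOn_of_card_image_eq (by rw [hS2, he, hScard])
    ext x
    simp only [Finset.mem_filter, Finset.mem_singleton]
    constructor
    · rintro ⟨hx, hcx⟩; exact hinj hx hv hcx
    · rintro rfl; exact ⟨hv, rfl⟩
  have hne : ∀ S (hS : S ∈ (powersetCard r (univ : Finset (Fin n))).filter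
      (fun S => S.image c = e)), ∀ i (hi : i ∈ e), (S.filter (fun x => c x = i)).Nonempty := by
    intro S hS i hi
    obtain ⟨-, hS2⟩ := Finset.mem_filter.1 hS
    rw [← hS2] at hi
    obtain ⟨v, hv, rfl⟩ := Finset.mem_image.1 hi
    exact ⟨v, Finset.mem_filter.2 ⟨hv, rfl⟩⟩
  refine Finset.card_bij'
    (fun S hS => fun i hi => (S.filter (fun x => c x = i)).min' (hne S hS i hi))
    (fun f _ => e.attach.image (fun a => f a.1 a.2)) ?_ ?_ ?_ ?_
  · intro S hS
    rw [Finset.mem_pi]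
    intro i hi
    have hmem := Finset.min'_mem _ (hne S hS i hi)
    rw [Finset.mem_filter] at hmem
    simp [hmem.2]
  · intro f hf
    rw [Finset.mem_pi] at hf
    have hcf : ∀ (a : Fin T) (ha : a ∈ e), c (f a ha) = a := by
      intro a ha
      have := hf a ha
      rw [Finset.mem_filter] at this
      exact this.2
    have hinj : Set.InjOn (fun a : {x // x ∈ e} => f a.1 a.2) e.attach := by
      intro x hx y hy hxy
      have : c (f x.1 x.2) = c (f y.1 y.2) := congrArg c hxy
      rw [hcf x.1 x.2, hcf y.1 y.2] at this
      exact Subtype.ext this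
    have hcard : (e.attach.image (fun a => f a.1 a.2)).card = r := by
      rw [Finset.card_image_of_injOn hinj, Finset.card_attach, he]
    have him : (e.attach.image (fun a => f a.1 a.2)).image c = e := by
      rw [Finset.image_image]
      have : (c ∘ fun a : {x // x ∈ e} => f a.1 a.2) = fun a : {x // x ∈ e} => a.1 := by
        funext a; exact hcf a.1 a.2
      rw [this, Finset.attach_image_val]
    exact Finset.mem_filter.2 ⟨mem_powersetCard.2 ⟨subset_univ _, hcard⟩, him⟩
  · intro S hS
    -- j (i S) = S
    ext v
    simp only [Finset.mem_image, Finset.mem_attach, true_and, Subtype.exists]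
    constructor
    · rintro ⟨a, ha, rfl⟩
      have hmem := Finset.min'_mem _ (hne S hS a ha)
      exact (Finset.mem_filter.1 hmem).1
    · intro hv
      obtain ⟨hS1, hS2⟩ := Finset.mem_filter.1 hS
      have hcv : c v ∈ e := by rw [← hS2]; exact Finset.mem_image_of_mem c hv
      refine ⟨c v, hcv, ?_⟩
      have hsg := hsing S hS v hv
      have hvmem : v ∈ S.filter (fun x => c x = c v) := by
        rw [hsg]; exact Finset.mem_singleton_self _
      refine le_antisymm (Finset.min'_le _ _ hvmem) (Finset.le_min' _ _ _ (fun y hy => ?_))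
      rw [hsg] at hy
      exact (Finset.mem_singleton.1 hy).ge
  · intro f hf
    funext i
    funext hi
    -- i (j f) = f
    set S := e.attach.image (fun a => f a.1 a.2) with hSdef
    have hSmem : S ∈ (powersetCard r (univ : Finset (Fin n))).filter
        (fun S => S.image c = e) := by
      rw [Finset.mem_pi] at hf
      have hcf : ∀ (a : Fin T) (ha : a ∈ e), c (f a ha) = a := by
        intro a ha
        have := hf a ha
        rw [Finset.mem_filter] at this
        exact this.2
      have hinj : Set.InjOn (fun a : {x // x ∈ e} => f a.1 a.2) e.attach := by
        intro x hx y hy hxy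
        have : c (f x.1 x.2) = c (f y.1 y.2) := congrArg c hxy
        rw [hcf x.1 x.2, hcf y.1 y.2] at this
        exact Subtype.ext this
      have hcard : S.card = r := by
        rw [hSdef, Finset.card_image_of_injOn hinj, Finset.card_attach, he]
      have him : S.image c = e := by
        rw [hSdef, Finset.image_image]
        have : (c ∘ fun a : {x // x ∈ e} => f a.1 a.2) = fun a : {x // x ∈ e} => a.1 := by
          funext a; exact hcf a.1 a.2
        rw [this, Finset.attach_image_val]
      exact Finset.mem_filter.2 ⟨mem_powersetCard.2 ⟨subset_univ _, hcard⟩, him⟩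
    have hv : f i hi ∈ S := by
      rw [hSdef]
      exact Finset.mem_image.2 ⟨⟨i, hi⟩, Finset.mem_attach _ _, rfl⟩
    have hci : c (f i hi) = i := by
      rw [Finset.mem_pi] at hf
      have := hf i hi
      rw [Finset.mem_filter] at this
      exact this.2
    have hsg := hsing S hSmem (f i hi) hv
    rw [hci] at hsg
    have hvmem : f i hi ∈ S.filter (fun x => c x = i) := by
      rw [hsg]; exact Finset.mem_singleton_self _
    show (S.filter (fun x => c x = i)).min' _ = f i hi
    refine le_antisymm (Finset.min'_le _ _ hvmem) (Finset.le_min' _ _ _ (fun y hy => ?_))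
    rw [hsg] at hy
    exact (Finset.mem_singleton.1 hy).ge

lemma count_good_edges {n : ℕ} (c : Fin n → Fin T) (E : Finset (Finset (Fin T)))
    (hE : ∀ e ∈ E, e.card = r) :
    ((powersetCard r (univ : Finset (Fin n))).filter (fun S => S.image c ∈ E)).card
      = ∑ e ∈ E, ∏ i ∈ e, (univ.filter (fun v => c v = i)).card := by
  classical
  have hfw := Finset.card_eq_sum_card_fiberwise
    (s := (powersetCard r (univ : Finset (Fin n))).filter (fun S => S.image c ∈ E))
    (t := E) (f := fun S => S.image c) (fun S hS => (Finset.mem_filter.1 hS).2)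
  rw [hfw]
  refine Finset.sum_congr rfl (fun e heE => ?_)
  rw [Finset.filter_filter]
  rw [show ((powersetCard r (univ : Finset (Fin n))).filter
      (fun S => S.image c ∈ E ∧ S.image c = e))
      = (powersetCard r (univ : Finset (Fin n))).filter (fun S => S.image c = e) from
    Finset.filter_congr (fun S _ => ⟨fun h => h.2, fun h => ⟨h ▸ heE, h⟩⟩)]
  exact count_image_eq c (hE e heE)

def blowup (E : Finset (Finset (Fin T))) (n : ℕ) (c : Fin n → Fin T)
    [DecidablePred (fun S : Finset (Fin n) => S.image c ∈ E)] : RGraph r where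
  n := n
  edges := (powersetCard r (univ : Finset (Fin n))).filter (fun S => S.image c ∈ E)
  card_eq := fun e he => (mem_powersetCard.1 (Finset.mem_filter.1 he).1).2

/-! ### A coloring with prescribed fiber sizes -/

def offs (k : Fin T → ℕ) (i : Fin T) : ℕ := ∑ j ∈ univ.filter (fun j => j < i), k j

noncomputable def thcol (hT : 0 < T) (k : Fin T → ℕ) {n : ℕ} (v : Fin n) : Fin T :=
  (univ.filter (fun i => offs k i ≤ v.val)).max'
    ⟨⟨0, hT⟩, by
      refine Finset.mem_filter.2 ⟨Finset.mem_univ _, ?_⟩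
      have : univ.filter (fun j : Fin T => j < ⟨0, hT⟩) = ∅ := by
        refine Finset.filter_eq_empty_iff.2 (fun j _ => ?_)
        simp [Fin.lt_def]
      simp [offs, this]⟩

lemma offs_add_le (k : Fin T → ℕ) (i : Fin T) : offs k i + k i ≤ ∑ j, k j := by
  have h : insert i (univ.filter (fun j => j < i)) ⊆ univ := subset_univ _
  have hni : i ∉ univ.filter (fun j => j < i) := by simp
  calc offs k i + k i = ∑ j ∈ insert i (univ.filter (fun j => j < i)), k j := by
        rw [Finset.sum_insert hni, add_comm]; rfl
    _ ≤ ∑ j, k j := Finset.sum_le_sum_of_subset h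

lemma offs_le_of_lt (k : Fin T → ℕ) {i i' : Fin T} (h : i < i') : offs k i + k i ≤ offs k i' := by
  have hsub : insert i (univ.filter (fun j => j < i)) ⊆ univ.filter (fun j => j < i') := by
    intro j hj
    rcases Finset.mem_insert.1 hj with rfl | hj'
    · exact Finset.mem_filter.2 ⟨Finset.mem_univ _, h⟩
    · exact Finset.mem_filter.2 ⟨Finset.mem_univ _, lt_trans (Finset.mem_filter.1 hj').2 h⟩
  have hni : i ∉ univ.filter (fun j => j < i) := by simp
  calc offs k i + k i = ∑ j ∈ insert i (univ.filter (fun j => j < i)), k j := by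
        rw [Finset.sum_insert hni, add_comm]; rfl
    _ ≤ offs k i' := Finset.sum_le_sum_of_subset hsub

lemma thcol_eq (hT : 0 < T) (k : Fin T → ℕ) {n : ℕ} (v : Fin n) (i : Fin T)
    (h1 : offs k i ≤ v.val) (h2 : v.val < offs k i + k i) : thcol hT k v = i := by
  unfold thcol
  apply le_antisymm
  · refine Finset.max'_le _ _ _ (fun y hy => ?_)
    by_contra hlt
    push_neg at hlt
    have := offs_le_of_lt k hlt
    have hy2 := (Finset.mem_filter.1 hy).2
    omega
  · exact Finset.le_max' _ i (Finset.mem_filter.2 ⟨Finset.mem_univ _, h1⟩)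

lemma thcol_fiber (hT : 0 < T) (k : Fin T → ℕ) {n : ℕ} (hsum : ∑ j, k j ≤ n) (i : Fin T) :
    k i ≤ ((univ : Finset (Fin n)).filter (fun v => thcol hT k v = i)).card := by
  classical
  have hIco : Finset.Ico (offs k i) (offs k i + k i)
      ⊆ ((univ : Finset (Fin n)).filter (fun v => thcol hT k v = i)).image Fin.val := by
    intro m hm
    obtain ⟨hm1, hm2⟩ := Finset.mem_Ico.1 hm
    have hmn : m < n := lt_of_lt_of_le hm2 (le_trans (offs_add_le k i) hsum)
    refine Finset.mem_image.2 ⟨⟨m, hmn⟩, ?_, rfl⟩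
    exact Finset.mem_filter.2 ⟨Finset.mem_univ _, thcol_eq hT k _ i hm1 hm2⟩
  calc k i = (Finset.Ico (offs k i) (offs k i + k i)).card := by rw [Nat.card_Ico]; omega
    _ ≤ (((univ : Finset (Fin n)).filter (fun v => thcol hT k v = i)).image Fin.val).card :=
        Finset.card_le_card hIco
    _ ≤ ((univ : Finset (Fin n)).filter (fun v => thcol hT k v = i)).card :=
        Finset.card_image_le

/-! ### The Lagrangian-type supremum -/

def splx (T : ℕ) : Set (Fin T → ℝ) := {w | (∀ i, 0 ≤ w i) ∧ ∑ i, w i = 1}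

noncomputable def lamP (E : Finset (Finset (Fin T))) (w : Fin T → ℝ) : ℝ :=
  ∑ e ∈ E, ∏ i ∈ e, w i

noncomputable def lam (E : Finset (Finset (Fin T))) : ℝ := sSup (lamP E '' splx T)

lemma splx_nonempty (hT : 0 < T) : (splx T).Nonempty := by
  refine ⟨fun _ => 1 / T, fun i => by positivity, ?_⟩
  rw [Finset.sum_const, card_univ, Fintype.card_fin, nsmul_eq_mul]
  field_simp

lemma splx_le_one {w : Fin T → ℝ} (hw : w ∈ splx T) (i : Fin T) : w i ≤ 1 := by
  obtain ⟨h0, h1⟩ := hw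
  calc w i ≤ ∑ j, w j := Finset.single_le_sum (fun j _ => h0 j) (Finset.mem_univ i)
    _ = 1 := h1

lemma lamP_le_card {E : Finset (Finset (Fin T))} {w : Fin T → ℝ} (hw : w ∈ splx T) :
    lamP E w ≤ E.card := by
  calc lamP E w ≤ ∑ _e ∈ E, (1 : ℝ) := by
        refine Finset.sum_le_sum (fun e _ => ?_)
        exact Finset.prod_le_one (fun i _ => hw.1 i) (fun i _ => splx_le_one hw i)
    _ = E.card := by simp

lemma bddAbove_lamP (E : Finset (Finset (Fin T))) : BddAbove (lamP E '' splx T) := by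
  refine ⟨E.card, ?_⟩
  rintro x ⟨w, hw, rfl⟩
  exact lamP_le_card hw

lemma lamP_le_lam {E : Finset (Finset (Fin T))} {w : Fin T → ℝ} (hw : w ∈ splx T) :
    lamP E w ≤ lam E :=
  le_csSup (bddAbove_lamP E) ⟨w, hw, rfl⟩

lemma lam_le (hT : 0 < T) {E : Finset (Finset (Fin T))} {C : ℝ}
    (h : ∀ w ∈ splx T, lamP E w ≤ C) : lam E ≤ C := by
  refine csSup_le (Set.Nonempty.image _ (splx_nonempty hT)) ?_
  rintro x ⟨w, hw, rfl⟩
  exact h w hw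

lemma exists_lt_lamP (hT : 0 < T) {E : Finset (Finset (Fin T))} {y : ℝ} (h : y < lam E) :
    ∃ w ∈ splx T, y < lamP E w := by
  obtain ⟨x, ⟨w, hw, rfl⟩, hx⟩ :=
    exists_lt_of_lt_csSup (Set.Nonempty.image _ (splx_nonempty hT)) h
  exact ⟨w, hw, hx⟩

lemma lam_empty (hT : 0 < T) : lam (∅ : Finset (Finset (Fin T))) = 0 := by
  have h : lamP (∅ : Finset (Finset (Fin T))) '' splx T = {0} := by
    ext x
    constructor
    · rintro ⟨w, -, rfl⟩; simp [lamP]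
    · rintro rfl
      obtain ⟨w, hw⟩ := splx_nonempty hT
      exact ⟨w, hw, by simp [lamP]⟩
  rw [lam, h, csSup_singleton]

/-- AM-GM: a product of `r` weights from the simplex is at most `(1/r)^r`. -/
lemma prod_le_inv_pow (hr : 0 < r) {e : Finset (Fin T)} (he : e.card = r)
    {w : Fin T → ℝ} (hw : w ∈ splx T) : ∏ i ∈ e, w i ≤ (1 / r : ℝ) ^ r := by
  have hrR : (0 : ℝ) < r := by exact_mod_cast hr
  have hgm := Real.geom_mean_le_arith_mean_weighted e (fun _ => 1 / r) w
    (fun i _ => by positivity)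
    (by rw [Finset.sum_const, he, nsmul_eq_mul]; field_simp)
    (fun i _ => hw.1 i)
  have hsum : ∑ i ∈ e, (1 / r : ℝ) * w i ≤ 1 / r := by
    rw [← Finset.mul_sum]
    have h1 : ∑ i ∈ e, w i ≤ 1 := by
      rw [← hw.2]
      exact Finset.sum_le_sum_of_subset_of_nonneg (subset_univ e) (fun i _ _ => hw.1 i)
    calc (1 / r : ℝ) * ∑ i ∈ e, w i ≤ (1 / r) * 1 := by
          refine mul_le_mul_of_nonneg_left h1 (by positivity)
      _ = 1 / r := mul_one _
  have hA : ∏ i ∈ e, (w i) ^ (1 / r : ℝ) ≤ 1 / r := le_trans hgm hsum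
  have hprodnn : (0 : ℝ) ≤ ∏ i ∈ e, (w i) ^ (1 / r : ℝ) :=
    Finset.prod_nonneg (fun i _ => Real.rpow_nonneg (hw.1 i) _)
  have hpow := pow_le_pow_left₀ hprodnn hA r
  have hLHS : (∏ i ∈ e, (w i) ^ (1 / r : ℝ)) ^ r = ∏ i ∈ e, w i := by
    rw [← Finset.prod_pow]
    refine Finset.prod_congr rfl (fun i _ => ?_)
    rw [← Real.rpow_natCast ((w i) ^ (1 / r : ℝ)) r, ← Real.rpow_mul (hw.1 i)]
    rw [one_div, inv_mul_cancel₀ (ne_of_gt hrR), Real.rpow_one]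
  rw [hLHS] at hpow
  exact hpow

lemma lam_erase_le (hT : 0 < T) (hr : 0 < r) {E : Finset (Finset (Fin T))}
    (hE : ∀ e ∈ E, e.card = r) {e₀ : Finset (Fin T)} (he₀ : e₀ ∈ E) :
    lam E ≤ lam (E.erase e₀) + (1 / r : ℝ) ^ r := by
  refine lam_le hT (fun w hw => ?_)
  have hsplit : lamP E w = lamP (E.erase e₀) w + ∏ i ∈ e₀, w i := by
    rw [lamP, lamP, ← Finset.sum_erase_add E _ he₀]
  rw [hsplit]
  exact add_le_add (lamP_le_lam hw) (prod_le_inv_pow hr (hE e₀ he₀) hw)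

/-! ### Limit facts -/

lemma tendsto_choose_mul (r : ℕ) :
    Tendsto (fun n : ℕ => ((n.choose r : ℝ) * r.factorial) / (n : ℝ) ^ r) atTop (𝓝 1) := by
  have hlim : Tendsto (fun n : ℕ => ∏ j ∈ Finset.range r, (1 - (j : ℝ) / n)) atTop (𝓝 1) := by
    have h1 : Tendsto (fun n : ℕ => ∏ j ∈ Finset.range r, (1 - (j : ℝ) / n)) atTop
        (𝓝 (∏ _j ∈ Finset.range r, (1 : ℝ))) := by
      refine tendsto_finset_prod _ (fun j _ => ?_)
      have h2 := (tendsto_const_nhds (x := (1:ℝ)) (f := (atTop : Filter ℕ))).sub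
        (tendsto_const_div_atTop_nhds_zero_nat (j : ℝ))
      simpa using h2
    simpa using h1
  refine hlim.congr' ?_
  filter_upwards [eventually_ge_atTop (max r 1)] with n hn
  have hrn : r ≤ n := le_trans (le_max_left _ _) hn
  have hn1 : 1 ≤ n := le_trans (le_max_right _ _) hn
  have hn0 : (n : ℝ) ≠ 0 := by
    have : (0:ℝ) < n := by exact_mod_cast hn1
    exact ne_of_gt this
  have hdesc : ((n.choose r : ℝ) * r.factorial) = (n.descFactorial r : ℝ) := by
    rw [Nat.descFactorial_eq_factorial_mul_choose]
    push_cast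
    ring
  rw [hdesc, Nat.descFactorial_eq_prod_range, Nat.cast_prod]
  rw [show ((n:ℝ))^r = ∏ _j ∈ Finset.range r, (n:ℝ) from by
    rw [Finset.prod_const, Finset.card_range]]
  rw [← Finset.prod_div_distrib]
  refine Finset.prod_congr rfl (fun j hj => ?_)
  have hjn : j ≤ n := le_trans (le_of_lt (Finset.mem_range.1 hj)) hrn
  rw [Nat.cast_sub hjn, sub_div, div_self hn0]

/-! ### Finiteness of the family -/

lemma fam_finite (E : Finset (Finset (Fin T))) (M : ℕ) : (Fam (r := r) E M).Finite := by
  classical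
  have hsub : Fam (r := r) E M ⊆ {F : RGraph r | F.n ≤ M} := fun F hF => hF.1
  refine Set.Finite.subset ?_ hsub
  have hinj : Set.InjOn (fun F : RGraph r =>
      (⟨F.n, F.edges⟩ : Σ n : ℕ, Finset (Finset (Fin n)))) {F : RGraph r | F.n ≤ M} := by
    rintro ⟨n1, E1, h1⟩ - ⟨n2, E2, h2⟩ - heq
    obtain ⟨hn, hE⟩ := Sigma.mk.inj_iff.1 heq
    subst hn
    simp only [heq_eq_eq] at hE
    subst hE
    rfl
  refine Set.Finite.of_finite_image ?_ hinj
  have himg : (fun F : RGraph r => (⟨F.n, F.edges⟩ : Σ n : ℕ, Finset (Finset (Fin n)))) ''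
      {F : RGraph r | F.n ≤ M} ⊆ {p : Σ n : ℕ, Finset (Finset (Fin n)) | p.1 ≤ M} := by
    rintro p ⟨F, hF, rfl⟩
    exact hF
  refine Set.Finite.subset ?_ himg
  have hcov : {p : Σ n : ℕ, Finset (Finset (Fin n)) | p.1 ≤ M}
      ⊆ (fun q : Σ k : Fin (M+1), Finset (Finset (Fin k.1)) =>
          (⟨q.1.1, q.2⟩ : Σ n : ℕ, Finset (Finset (Fin n)))) '' Set.univ := by
    rintro ⟨n, En⟩ hn
    exact ⟨⟨⟨n, Nat.lt_succ_of_le hn⟩, En⟩, Set.mem_univ _, rfl⟩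
  exact Set.Finite.subset (Set.Finite.image _ Set.finite_univ) hcov

/-! ### Upper bound for good graphs -/

lemma card_le_of_good (hT : 0 < T) {E : Finset (Finset (Fin T))} (hE : ∀ e ∈ E, e.card = r)
    {G : RGraph r} (hG : 0 < G.n) (h : Good E G) :
    (G.edges.card : ℝ) ≤ lam E * (G.n : ℝ) ^ r := by
  classical
  obtain ⟨c, hc⟩ := h
  have hsub : G.edges ⊆ (powersetCard r (univ : Finset (Fin G.n))).filter
      (fun S => S.image c ∈ E) := fun e he =>
    Finset.mem_filter.2 ⟨mem_powersetCard.2 ⟨subset_univ _, G.card_eq e he⟩, hc e he⟩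
  have h1 : G.edges.card
      ≤ ∑ e ∈ E, ∏ i ∈ e, ((univ : Finset (Fin G.n)).filter (fun v => c v = i)).card := by
    rw [← count_good_edges c E hE]
    exact Finset.card_le_card hsub
  have hN0 : (0:ℝ) < (G.n:ℝ) := by exact_mod_cast hG
  set w : Fin T → ℝ :=
    fun i => (((univ : Finset (Fin G.n)).filter (fun v => c v = i)).card : ℝ) / G.n with hwdef
  have hw : w ∈ splx T := by
    constructor
    · intro i; rw [hwdef]; positivity
    · have hpart : ∑ i : Fin T, (((univ : Finset (Fin G.n)).filter (fun v => c v = i)).card)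
          = G.n := by
        have hfw := Finset.card_eq_sum_card_fiberwise (s := (univ : Finset (Fin G.n)))
          (t := (univ : Finset (Fin T))) (f := c) (fun v _ => Finset.mem_univ _)
        rw [← hfw, card_univ, Fintype.card_fin]
      rw [hwdef, ← Finset.sum_div]
      rw [show (∑ i : Fin T, ((((univ : Finset (Fin G.n)).filter (fun v => c v = i)).card : ℝ)))
          = (G.n : ℝ) from by exact_mod_cast hpart]
      exact div_self (ne_of_gt hN0)
  have hpow0 : ((G.n : ℝ))^r ≠ 0 := by positivity
  have h2 : (∑ e ∈ E, ∏ i ∈ e, (((univ : Finset (Fin G.n)).filter (fun v => c v = i)).card : ℝ))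
      = (G.n : ℝ) ^ r * lamP E w := by
    rw [lamP, Finset.mul_sum]
    refine Finset.sum_congr rfl (fun e he => ?_)
    rw [hwdef]
    rw [Finset.prod_div_distrib, Finset.prod_const, hE e he, mul_comm, div_mul_cancel₀ _ hpow0]
  calc (G.edges.card : ℝ)
      ≤ ∑ e ∈ E, ∏ i ∈ e, (((univ : Finset (Fin G.n)).filter (fun v => c v = i)).card : ℝ) := by
        exact_mod_cast h1
    _ = (G.n : ℝ)^r * lamP E w := h2
    _ ≤ (G.n : ℝ)^r * lam E :=
        mul_le_mul_of_nonneg_left (lamP_le_lam hw) (by positivity)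
    _ = lam E * (G.n : ℝ)^r := mul_comm _ _

/-! ### Lower bound via blow-ups -/

lemma exNum_blowup_ge (hT : 0 < T) {E : Finset (Finset (Fin T))} (hE : ∀ e ∈ E, e.card = r)
    (M : ℕ) (k : Fin T → ℕ) {n : ℕ} (hsum : ∑ j, k j ≤ n) :
    ∑ e ∈ E, ∏ i ∈ e, k i ≤ exNum r (Fam E M) n := by
  classical
  set c : Fin n → Fin T := fun v => thcol hT k v with hcdef
  set B : RGraph r := blowup E n c with hBdef
  have hBfree : B.Free (Fam E M) :=
    free_of_good ⟨c, fun e he => by exact ((@Finset.mem_filter _ (fun S : Finset (Fin n) => S.image c ∈ E) (fun _ => Finset.decidableMem _ _) (powersetCard r univ) e).1 he).2⟩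
  have hcard : ∑ e ∈ E, ∏ i ∈ e, k i ≤ B.edges.card := by
    have hBedges : B.edges.card
        = ∑ e ∈ E, ∏ i ∈ e, ((univ : Finset (Fin n)).filter (fun v => c v = i)).card :=
      count_good_edges c E hE
    rw [hBedges]
    refine Finset.sum_le_sum (fun e _ => ?_)
    exact Finset.prod_le_prod' (fun i _ => thcol_fiber hT k hsum i)
  exact le_trans hcard (le_exNum B rfl hBfree)

end TuranAux

open TuranAux Finset in
/-- For every `r ≥ 3` and all reals `0 < a < b ≤ 1` with `b - a > r!/r^r`, there is a
finite family `𝓕` of `r`-graphs whose Turán density `π(𝓕)` satisfies `a < π(𝓕) < b`. -/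
theorem stmt2 (r : ℕ) (hr : 3 ≤ r) (a b : ℝ)
    (ha : 0 < a) (hab : a < b) (hb : b ≤ 1)
    (hlen : (r.factorial : ℝ) / (r : ℝ) ^ r < b - a) :
    ∃ 𝓕 : Set (RGraph r), 𝓕.Finite ∧ ∃ x : ℝ,
      Tendsto (fun n : ℕ => (exNum r 𝓕 n : ℝ) / (n.choose r : ℝ)) atTop (𝓝 x) ∧
      a < x ∧ x < b := by
  classical
  have hr0 : 0 < r := lt_of_lt_of_le (by norm_num) hr
  have hrR : (0:ℝ) < r := by exact_mod_cast hr0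
  have hfac : (0:ℝ) < r.factorial := by exact_mod_cast r.factorial_pos
  have ha1 : a < 1 := lt_of_lt_of_le hab hb
  have hb0 : (0:ℝ) < b := lt_trans ha hab
  -- Step 1: choose T with r ≤ T and a < C(T,r)·r!/T^r
  obtain ⟨T, hTge, hTa⟩ : ∃ T : ℕ, r ≤ T ∧ a < ((T.choose r : ℝ) * r.factorial) / (T:ℝ)^r := by
    have h1 := (tendsto_choose_mul r).eventually (eventually_gt_nhds ha1)
    obtain ⟨T, hT1, hT2⟩ := (h1.and (eventually_ge_atTop r)).exists
    exact ⟨T, hT2, hT1⟩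
  have hT0 : 0 < T := lt_of_lt_of_le hr0 hTge
  have hT0R : (0:ℝ) < T := by exact_mod_cast hT0
  set U : Finset (Finset (Fin T)) := powersetCard r (univ : Finset (Fin T)) with hUdef
  have hU : ∀ e ∈ U, e.card = r := fun e he => (mem_powersetCard.1 he).2
  -- Step 2: a/r! < lam U
  have hUlam : a / r.factorial < lam U := by
    have hwmem : (fun _ : Fin T => (1:ℝ)/T) ∈ splx T := by
      constructor
      · intro i; positivity
      · rw [Finset.sum_const, card_univ, Fintype.card_fin, nsmul_eq_mul]; field_simp
    have hval : lamP U (fun _ => (1:ℝ)/T) = (T.choose r : ℝ) * ((1:ℝ)/T)^r := by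
      rw [lamP]
      rw [Finset.sum_congr rfl (fun e he => by rw [Finset.prod_const, hU e he])]
      rw [Finset.sum_const, hUdef, card_powersetCard, card_univ, Fintype.card_fin, nsmul_eq_mul]
    have hlt : a / r.factorial < lamP U (fun _ => (1:ℝ)/T) := by
      rw [hval, div_lt_iff₀ hfac]
      calc a < ((T.choose r : ℝ) * r.factorial) / (T:ℝ)^r := hTa
        _ = (T.choose r : ℝ) * ((1:ℝ)/T)^r * r.factorial := by
            rw [div_pow, one_pow]
            field_simp
    exact lt_of_lt_of_le hlt (lamP_le_lam hwmem)
  -- Step 3: minimal subfamily E₀ ⊆ U with a/r! < lam E₀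
  set 𝒜 : Finset (Finset (Finset (Fin T))) :=
    U.powerset.filter (fun E => a / r.factorial < lam E) with h𝒜
  have h𝒜ne : 𝒜.Nonempty :=
    ⟨U, Finset.mem_filter.2 ⟨Finset.mem_powerset_self U, hUlam⟩⟩
  obtain ⟨E₀, hE₀mem, hE₀min⟩ := Finset.exists_min_image 𝒜 Finset.card h𝒜ne
  have hE₀sub : E₀ ⊆ U := Finset.mem_powerset.1 (Finset.mem_filter.1 hE₀mem).1
  have hE₀lam : a / r.factorial < lam E₀ := (Finset.mem_filter.1 hE₀mem).2
  have hE₀card : ∀ e ∈ E₀, e.card = r := fun e he => hU e (hE₀sub he)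
  have hE₀ne : E₀.Nonempty := by
    rcases Finset.eq_empty_or_nonempty E₀ with rfl | h
    · rw [lam_empty hT0] at hE₀lam
      exact absurd hE₀lam (not_lt.2 (by positivity))
    · exact h
  obtain ⟨e₀, he₀⟩ := hE₀ne
  have hE'le : lam (E₀.erase e₀) ≤ a / r.factorial := by
    by_contra hcon
    push_neg at hcon
    have hmem' : E₀.erase e₀ ∈ 𝒜 := Finset.mem_filter.2
      ⟨Finset.mem_powerset.2 (subset_trans (Finset.erase_subset _ _) hE₀sub), hcon⟩
    have h1 := hE₀min _ hmem'
    have h2 := Finset.card_erase_lt_of_mem he₀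
    omega
  have hLam_ub : lam E₀ ≤ a / r.factorial + (1/(r:ℝ))^r :=
    le_trans (lam_erase_le hT0 hr0 hE₀card he₀) (add_le_add_left hE'le _)
  have hLamb : (r.factorial : ℝ) * lam E₀ < b := by
    calc (r.factorial:ℝ) * lam E₀ ≤ r.factorial * (a / r.factorial + (1/(r:ℝ))^r) :=
          mul_le_mul_of_nonneg_left hLam_ub (le_of_lt hfac)
      _ = a + (r.factorial:ℝ)/(r:ℝ)^r := by
          rw [mul_add, mul_div_cancel₀ _ (ne_of_gt hfac), div_pow, one_pow, mul_one_div]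
      _ < b := by linarith [hlen]
  have hLam0 : 0 < lam E₀ := lt_trans (div_pos ha hfac) hE₀lam
  -- Step 4: choose M with r ≤ M and lam E₀ * M^r < b * C(M,r)
  obtain ⟨M, hMge, hMlt⟩ : ∃ M : ℕ, r ≤ M ∧ lam E₀ * (M:ℝ)^r < b * (M.choose r : ℝ) := by
    have hq : (r.factorial:ℝ) * lam E₀ / b < 1 := by
      rw [div_lt_one hb0]; exact hLamb
    have h1 := (tendsto_choose_mul r).eventually (eventually_gt_nhds hq)
    obtain ⟨M, hM1, hM2⟩ := (h1.and (eventually_ge_atTop (max r 1))).exists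
    have hMr : r ≤ M := le_trans (le_max_left _ _) hM2
    have hM0 : (0:ℝ) < M := by
      have : 1 ≤ M := le_trans (le_max_right _ _) hM2
      exact_mod_cast this
    refine ⟨M, hMr, ?_⟩
    have hMpow : (0:ℝ) < (M:ℝ)^r := by positivity
    rw [div_lt_div_iff₀ hb0 hMpow] at hM1
    nlinarith [hM1, hfac]
  -- The family
  set 𝓕 : Set (RGraph r) := Fam E₀ M with h𝓕
  have hfe : ∀ m, RGraph.Free 𝓕 (emptyG r m) := fun m => emptyG_free hT0 E₀ M m
  set x : ℝ := ⨅ n, dd 𝓕 (n + r) with hx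
  have hdd : Tendsto (dd 𝓕) atTop (𝓝 x) := dd_tendsto hfe hr0
  refine ⟨𝓕, fam_finite E₀ M, x, hdd, ?_, ?_⟩
  -- Lower bound: a < x
  · obtain ⟨w, hw, hwgt⟩ := exists_lt_lamP hT0 hE₀lam
    set k : ℕ → Fin T → ℕ := fun n i => ⌊w i * n⌋₊ with hk
    have hksum : ∀ n : ℕ, ∑ j, k n j ≤ n := by
      intro n
      have hcast : ((∑ j, k n j : ℕ) : ℝ) ≤ (n:ℝ) := by
        rw [Nat.cast_sum]
        calc ∑ j, ((k n j : ℕ) : ℝ) ≤ ∑ j, w j * n :=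
              Finset.sum_le_sum (fun j _ =>
                Nat.floor_le (mul_nonneg (hw.1 j) (Nat.cast_nonneg n)))
          _ = (∑ j, w j) * n := by rw [Finset.sum_mul]
          _ = n := by rw [hw.2, one_mul]
      exact_mod_cast hcast
    have hlow : ∀ n : ℕ, (∑ e ∈ E₀, ∏ i ∈ e, k n i) ≤ exNum r 𝓕 n := fun n =>
      exNum_blowup_ge hT0 hE₀card M (k n) (hksum n)
    set L : ℕ → ℝ := fun n => ((∑ e ∈ E₀, ∏ i ∈ e, (k n i : ℝ))) / (n.choose r : ℝ) with hLdef
    have hL : Tendsto L atTop (𝓝 (lamP E₀ w * r.factorial)) := by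
      have hA : Tendsto (fun n : ℕ => ∑ e ∈ E₀, ∏ i ∈ e, ((k n i : ℝ)/(n:ℝ))) atTop
          (𝓝 (lamP E₀ w)) := by
        rw [lamP] at *
        refine tendsto_finset_sum _ (fun e _ => ?_)
        refine tendsto_finset_prod _ (fun i _ => ?_)
        exact (tendsto_nat_floor_mul_div_atTop (hw.1 i)).comp tendsto_natCast_atTop_atTop
      have hB : Tendsto (fun n : ℕ =>
          (r.factorial : ℝ) / (((n.choose r : ℝ) * r.factorial) / (n:ℝ)^r)) atTop
          (𝓝 ((r.factorial : ℝ) / 1)) :=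
        tendsto_const_nhds.div (tendsto_choose_mul r) one_ne_zero
      rw [div_one] at hB
      have hAB := hA.mul hB
      refine hAB.congr' ?_
      filter_upwards [eventually_ge_atTop (max r 1)] with n hn
      have hrn : r ≤ n := le_trans (le_max_left _ _) hn
      have hn1 : 1 ≤ n := le_trans (le_max_right _ _) hn
      have hC0 : (0:ℝ) < (n.choose r : ℝ) := by exact_mod_cast Nat.choose_pos hrn
      have hn0 : (0:ℝ) < (n:ℝ) := by exact_mod_cast hn1
      have hsum_eq : (∑ e ∈ E₀, ∏ i ∈ e, ((k n i : ℝ)/(n:ℝ)))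
          = (∑ e ∈ E₀, ∏ i ∈ e, (k n i : ℝ)) / (n:ℝ)^r := by
        rw [Finset.sum_div]
        refine Finset.sum_congr rfl (fun e he => ?_)
        rw [Finset.prod_div_distrib, Finset.prod_const, hE₀card e he]
      rw [hLdef]
      simp only
      rw [hsum_eq]
      field_simp
    have hLd : ∀ n : ℕ, L n ≤ dd 𝓕 n := by
      intro n
      rcases lt_or_ge n r with hlt | hge
      · have hch : n.choose r = 0 := Nat.choose_eq_zero_of_lt hlt
        rw [hLdef, dd]
        simp [hch]
      · have hC0 : (0:ℝ) < (n.choose r : ℝ) := by exact_mod_cast Nat.choose_pos hge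
        have hnum : ((∑ e ∈ E₀, ∏ i ∈ e, k n i : ℕ) : ℝ) ≤ (exNum r 𝓕 n : ℝ) := by
          exact_mod_cast hlow n
        have hnum' : (∑ e ∈ E₀, ∏ i ∈ e, (k n i : ℝ)) ≤ (exNum r 𝓕 n : ℝ) := by
          push_cast at hnum
          exact hnum
        rw [hLdef, dd]
        simp only
        gcongr
    have hax : lamP E₀ w * r.factorial ≤ x := le_of_tendsto_of_tendsto' hL hdd hLd
    have haw : a < lamP E₀ w * r.factorial := (div_lt_iff₀ hfac).1 hwgt
    exact lt_of_lt_of_le haw hax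
  -- Upper bound: x < b
  · have hbddB : BddBelow (Set.range fun n => dd 𝓕 (n + r)) := by
      refine ⟨0, ?_⟩
      rintro y ⟨n, rfl⟩
      exact dd_nonneg _
    have hx_le : x ≤ dd 𝓕 M := by
      have h1 := ciInf_le hbddB (M - r)
      rwa [Nat.sub_add_cancel hMge] at h1
    refine lt_of_le_of_lt hx_le ?_
    obtain ⟨G, hGn, hGf, hGc⟩ := exNum_spec hfe M
    have hGood : Good E₀ G := good_of_free hT0 (le_of_eq hGn) hGf
    have hG0 : 0 < G.n := by rw [hGn]; exact lt_of_lt_of_le hr0 hMge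
    have hcard := card_le_of_good hT0 hE₀card hG0 hGood
    have hGnR : ((G.n : ℕ) : ℝ) = (M : ℝ) := by rw [hGn]
    rw [hGnR] at hcard
    have hC0 : (0:ℝ) < (M.choose r : ℝ) := by exact_mod_cast Nat.choose_pos hMge
    have hddM : dd 𝓕 M = (G.edges.card : ℝ) / (M.choose r : ℝ) := by rw [dd, ← hGc]
    rw [hddM, div_lt_iff₀ hC0]
    calc (G.edges.card:ℝ) ≤ lam E₀ * (M:ℝ)^r := hcard
      _ < b * (M.choose r:ℝ) := hMlt
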